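/- Let φ₄ᵗ be the sequence obtained by wreathing of order 3 the projected hexagonal sequence K_t over {1,2,3} with the circular sequence Z(3, 3^{t-1}) over {4,5,6} with base word 456; i.e., φ₄ᵗ alternates blocks of 3 consecutive terms of K_t with blocks of 3 consecutive terms of Z(3,3^{t-1}). Then every 5 consecutive terms of φ₄ᵗ are pairwise distinct. -/

import Mathlib

/-- The hexagonal morphism `κ` on the auxiliary alphabet `{1̄,1̲,2̄,2̲,3̄,3̲}`,
encoded as `Fin 6` via `0=1̄, 1=1̲, 2=2̄, 3=2̲, 4=3̄, 5=3̲`: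
`κ(1̄)=1̄2̲3̄, κ(2̄)=2̄3̲1̄, κ(3̄)=3̄1̲2̄, κ(1̲)=3̲2̄1̲, κ(2̲)=1̲3̄2̲, κ(3̲)=2̲1̄3̲`. -/
def hexKappa : Fin 6 → List (Fin 6) :=
  ![[0, 3, 4], [5, 2, 1], [2, 5, 0], [1, 4, 3], [4, 1, 2], [3, 0, 5]]

/-- The projection `π` sending both `ā` and `a̲` to `a`, with `{1,2,3}` encoded as `Fin 3`
via `0=1, 1=2, 2=3`. -/
def hexPi : Fin 6 → Fin 3 := ![0, 0, 1, 1, 2, 2]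

/-- The `t`-fold iterate `κ^t(1̄)` as a word over the auxiliary alphabet. -/
def hexIter : ℕ → List (Fin 6)
  | 0 => [0]
  | t + 1 => (hexIter t).flatMap hexKappa

/-- The sequence `K_t = π(κ^t(1̄))`. -/
def hexK (t : ℕ) : List (Fin 3) := (hexIter t).map hexPi

/-- The circular sequence `Z(ℓ,t)` over base word `φ` (with `ℓ = φ.length`):
`t` copies of `φ⁰φ¹⋯φ^(ℓ-1)`, where `φⁱ` is the cyclic `i`-shift of `φ`. -/
def circSeq {α : Type*} (φ : List α) (t : ℕ) : List α :=
  (List.range t).flatMap fun _ => (List.range φ.length).flatMap fun i => φ.rotate i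

/-- Wreathing with `n` rounds: alternately take blocks of `l` consecutive terms from the
base and the wrap. -/
def wreathAux {α : Type*} (l : ℕ) : ℕ → List α → List α → List α
  | 0, _, _ => []
  | n + 1, a, b => a.take l ++ b.take l ++ wreathAux l n (a.drop l) (b.drop l)

/-- The sequence `φ₄ᵗ = K_t ≀₃ Z(3, 3^(t-1))`, with `K_t` taken over `{1,2,3}` and the
circular sequence over `{4,5,6}` with base word `456`. -/
def phi4 (t : ℕ) : List ℕ :=
  wreathAux 3 (3 ^ (t - 1)) ((hexK t).map fun x => (x : ℕ) + 1)
    (circSeq [4, 5, 6] (3 ^ (t - 1)))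

namespace Phi4Aux

/-! ### Chunks: blocks of six consecutive letters of `φ₄ᵗ` -/

abbrev Chunk := ℕ × ℕ × ℕ × ℕ × ℕ × ℕ

def cToList : Chunk → List ℕ := fun (a,b,c,d,e,f) => [a,b,c,d,e,f]

def cOK : Chunk → Prop := fun (a,b,c,d,e,f) =>
  1 ≤ a ∧ a ≤ 3 ∧ 1 ≤ b ∧ b ≤ 3 ∧ 1 ≤ c ∧ c ≤ 3 ∧ a ≠ b ∧ a ≠ c ∧ b ≠ c ∧
  4 ≤ d ∧ d ≤ 6 ∧ 4 ≤ e ∧ e ≤ 6 ∧ 4 ≤ f ∧ f ≤ 6 ∧ d ≠ e ∧ d ≠ f ∧ e ≠ f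

def cLink : Chunk → Chunk → Prop := fun (_,_,c,_,_,f) (a',_,_,d',_,_) => c ≠ a' ∧ f ≠ d'

lemma ne65 {p q : ℕ} (hp : p ≤ 3) (hq : 4 ≤ q) : p ≠ q := by omega

lemma nodup5 {p q r s u : ℕ} (h1 : p ≠ q) (h2 : p ≠ r) (h3 : p ≠ s) (h4 : p ≠ u)
    (h5 : q ≠ r) (h6 : q ≠ s) (h7 : q ≠ u) (h8 : r ≠ s) (h9 : r ≠ u) (h10 : s ≠ u) :
    ([p, q, r, s, u] : List ℕ).Nodup := by
  simp [List.nodup_cons]; exact ⟨⟨h1,h2,h3,h4⟩,⟨h5,h6,h7⟩,⟨h8,h9⟩,h10⟩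

lemma nodup4 {q r s u : ℕ} (h5 : q ≠ r) (h6 : q ≠ s) (h7 : q ≠ u) (h8 : r ≠ s)
    (h9 : r ≠ u) (h10 : s ≠ u) : ([q, r, s, u] : List ℕ).Nodup := by
  simp [List.nodup_cons]; exact ⟨⟨h5,h6,h7⟩,⟨h8,h9⟩,h10⟩

lemma nodup3 {r s u : ℕ} (h8 : r ≠ s) (h9 : r ≠ u) (h10 : s ≠ u) :
    ([r, s, u] : List ℕ).Nodup := by
  simp [List.nodup_cons]; exact ⟨⟨h8,h9⟩,h10⟩

/-- The key window computation inside two consecutive chunks. -/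
lemma window2 {a b c d e f a' b' c' d' e' f' : ℕ} (rest : List ℕ)
    (ha3 : a ≤ 3) (hb3 : b ≤ 3) (hc3 : c ≤ 3) (hab : a ≠ b) (hac : a ≠ c) (hbc : b ≠ c)
    (hd4 : 4 ≤ d) (he4 : 4 ≤ e) (hf4 : 4 ≤ f) (hde : d ≠ e) (hdf : d ≠ f) (hef : e ≠ f)
    (ha3' : a' ≤ 3) (hb3' : b' ≤ 3) (hc3' : c' ≤ 3) (hab' : a' ≠ b') (hac' : a' ≠ c')
    (hbc' : b' ≠ c') (hd4' : 4 ≤ d') (hca : c ≠ a') (hfd : f ≠ d') :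
    ∀ j, j < 6 → (List.take 5 (List.drop j
      (a :: b :: c :: d :: e :: f :: a' :: b' :: c' :: d' :: e' :: f' :: rest))).Nodup := by
  intro j hj
  obtain rfl | rfl | rfl | rfl | rfl | rfl :
      j = 0 ∨ j = 1 ∨ j = 2 ∨ j = 3 ∨ j = 4 ∨ j = 5 := by omega
  · exact nodup5 hab hac (ne65 ha3 hd4) (ne65 ha3 he4) hbc (ne65 hb3 hd4) (ne65 hb3 he4)
      (ne65 hc3 hd4) (ne65 hc3 he4) hde
  · exact nodup5 hbc (ne65 hb3 hd4) (ne65 hb3 he4) (ne65 hb3 hf4) (ne65 hc3 hd4)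
      (ne65 hc3 he4) (ne65 hc3 hf4) hde hdf hef
  · exact nodup5 (ne65 hc3 hd4) (ne65 hc3 he4) (ne65 hc3 hf4) hca hde hdf
      (ne65 ha3' hd4).symm hef (ne65 ha3' he4).symm (ne65 ha3' hf4).symm
  · exact nodup5 hde hdf (ne65 ha3' hd4).symm (ne65 hb3' hd4).symm hef
      (ne65 ha3' he4).symm (ne65 hb3' he4).symm (ne65 ha3' hf4).symm (ne65 hb3' hf4).symm hab'
  · exact nodup5 hef (ne65 ha3' he4).symm (ne65 hb3' he4).symm (ne65 hc3' he4).symm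
      (ne65 ha3' hf4).symm (ne65 hb3' hf4).symm (ne65 hc3' hf4).symm hab' hac' hbc'
  · exact nodup5 (ne65 ha3' hf4).symm (ne65 hb3' hf4).symm (ne65 hc3' hf4).symm hfd
      hab' hac' (ne65 ha3' hd4') hbc' (ne65 hb3' hd4') (ne65 hc3' hd4')

/-- The key window computation inside a single final chunk. -/
lemma window1 {a b c d e f : ℕ}
    (ha3 : a ≤ 3) (hb3 : b ≤ 3) (hc3 : c ≤ 3) (hab : a ≠ b) (hac : a ≠ c) (hbc : b ≠ c)
    (hd4 : 4 ≤ d) (he4 : 4 ≤ e) (hf4 : 4 ≤ f) (hde : d ≠ e) (hdf : d ≠ f) (hef : e ≠ f) :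
    ∀ j, j < 6 → (List.take 5 (List.drop j
      (a :: b :: c :: d :: e :: f :: ([] : List ℕ)))).Nodup := by
  intro j hj
  obtain rfl | rfl | rfl | rfl | rfl | rfl :
      j = 0 ∨ j = 1 ∨ j = 2 ∨ j = 3 ∨ j = 4 ∨ j = 5 := by omega
  · exact nodup5 hab hac (ne65 ha3 hd4) (ne65 ha3 he4) hbc (ne65 hb3 hd4) (ne65 hb3 he4)
      (ne65 hc3 hd4) (ne65 hc3 he4) hde
  · exact nodup5 hbc (ne65 hb3 hd4) (ne65 hb3 he4) (ne65 hb3 hf4) (ne65 hc3 hd4)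
      (ne65 hc3 he4) (ne65 hc3 hf4) hde hdf hef
  · exact nodup4 (ne65 hc3 hd4) (ne65 hc3 he4) (ne65 hc3 hf4) hde hdf hef
  · exact nodup3 hde hdf hef
  · exact List.nodup_cons.mpr ⟨by simpa using hef, List.nodup_singleton f⟩
  · exact List.nodup_singleton f

lemma good5 : ∀ (L : List Chunk), (∀ x ∈ L, cOK x) → List.Chain' cLink L →
    ∀ j, (((L.flatMap cToList).drop j).take 5).Nodup := by
  intro L
  induction L with
  | nil => intro _ _ j; simp
  | cons x L ih =>
    intro hok hch j
    obtain ⟨a,b,c,d,e,f⟩ := x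
    rcases Nat.lt_or_ge j 6 with hj | hj
    · have hx : cOK (a,b,c,d,e,f) := hok _ List.mem_cons_self
      obtain ⟨ha1,ha3,hb1,hb3,hc1,hc3,hab,hac,hbc,hd4,hd6,he4,he6,hf4,hf6,hde,hdf,hef⟩ := hx
      cases L with
      | nil =>
        exact window1 ha3 hb3 hc3 hab hac hbc hd4 he4 hf4 hde hdf hef j hj
      | cons y L' =>
        obtain ⟨a',b',c',d',e',f'⟩ := y
        have hy : cOK (a',b',c',d',e',f') :=
          hok _ (List.mem_cons_of_mem _ List.mem_cons_self)
        obtain ⟨ha1',ha3',hb1',hb3',hc1',hc3',hab',hac',hbc',hd4',hd6',he4',he6',hf4',hf6',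
            hde',hdf',hef'⟩ := hy
        obtain ⟨hca, hfd⟩ : cLink (a,b,c,d,e,f) (a',b',c',d',e',f') :=
          (List.isChain_cons_cons.mp hch).1
        exact window2 (L'.flatMap cToList) ha3 hb3 hc3 hab hac hbc hd4 he4 hf4 hde hdf hef
          ha3' hb3' hc3' hab' hac' hbc' hd4' hca hfd j hj
    · obtain ⟨j', rfl⟩ : ∃ j', j = j' + 6 := ⟨j - 6, by omega⟩
      have hdrop : (((a,b,c,d,e,f) :: L).flatMap cToList).drop (j' + 6)
          = (L.flatMap cToList).drop j' := by
        rw [List.flatMap_cons]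
        simp only [cToList, List.cons_append, List.nil_append]
        rw [show j' + 6 = 6 + j' by omega, ← List.drop_drop]
        norm_num
      rw [hdrop]
      exact ih (fun z hz => hok z (List.mem_cons_of_mem _ hz)) (List.IsChain.tail hch) j'

/-! ### Structure of the hexagonal word -/

lemma hexKappa_length (x : Fin 6) : (hexKappa x).length = 3 := by
  fin_cases x <;> rfl

lemma hexIter_length (t : ℕ) : (hexIter t).length = 3 ^ t := by
  induction t with
  | zero => rfl
  | succ t ih =>
    rw [hexIter, List.length_flatMap, pow_succ]
    have h3 : ∀ l : List (Fin 6), (l.map fun x => (hexKappa x).length).sum = l.length * 3 := by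
      intro l
      induction l with
      | nil => rfl
      | cons z l ihl => simp [hexKappa_length, ihl]; ring
    rw [h3, ih]

/-- The set of pairs of letters that can occur consecutively in some `hexIter t`. -/
def adjI (x y : Fin 6) : Prop :=
  (x, y) ∈ ([(0,3),(0,5),(1,2),(1,4),(2,1),(2,5),(3,0),(3,4),(4,1),(4,3),(5,0),(5,2)] :
    List (Fin 6 × Fin 6))

instance (x y : Fin 6) : Decidable (adjI x y) :=
  inferInstanceAs (Decidable ((x, y) ∈ ([(0,3),(0,5),(1,2),(1,4),(2,1),(2,5),(3,0),(3,4),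
    (4,1),(4,3),(5,0),(5,2)] : List (Fin 6 × Fin 6))))

lemma chain'_pair3 {R : Fin 6 → Fin 6 → Prop} {a b c : Fin 6} (h1 : R a b) (h2 : R b c) :
    List.Chain' R [a, b, c] :=
  List.isChain_cons_cons.mpr ⟨h1, List.isChain_cons_cons.mpr ⟨h2, List.isChain_singleton c⟩⟩

/-- The last letter of each `κ`-image. -/
def lastK : Fin 6 → Fin 6 := ![4, 1, 0, 3, 2, 5]

/-- The first letter of each `κ`-image. -/
def headK : Fin 6 → Fin 6 := ![0, 5, 2, 1, 4, 3]

lemma getLast?_kappa : ∀ x : Fin 6, (hexKappa x).getLast? = some (lastK x) := by decide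

lemma head?_kappa : ∀ x : Fin 6, (hexKappa x).head? = some (headK x) := by decide

lemma adjI_step : ∀ x y : Fin 6, adjI x y → adjI (lastK x) (headK y) := by decide

lemma chain'_kappa : ∀ x : Fin 6, List.Chain' adjI (hexKappa x) := by
  intro x
  fin_cases x <;> exact chain'_pair3 (by decide) (by decide)

lemma chain'_hexIter (t : ℕ) : List.Chain' adjI (hexIter t) := by
  induction t with
  | zero => simp [hexIter, List.Chain']
  | succ t ih =>
    rw [hexIter, List.flatMap]
    have hne : ∀ x : Fin 6, hexKappa x ≠ [] := by decide
    have hnil : [] ∉ (hexIter t).map hexKappa := by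
      intro h
      obtain ⟨x, -, hx⟩ := List.mem_map.mp h
      exact hne x hx
    unfold List.Chain'
    rw [List.isChain_flatten hnil]
    constructor
    · intro l hl
      obtain ⟨x, -, rfl⟩ := List.mem_map.mp hl
      exact chain'_kappa x
    · rw [List.isChain_map]
      refine ih.imp ?_
      intro x y hxy u hu v hv
      rw [getLast?_kappa, Option.mem_some_iff] at hu
      rw [head?_kappa, Option.mem_some_iff] at hv
      subst hu; subst hv
      exact adjI_step x y hxy

/-! ### The wreathed sequence as a concatenation of chunks -/

lemma wreathAux_eq {α : Type*} (l : ℕ) : ∀ (n : ℕ) (a b : List α),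
    wreathAux l n a b = (List.range n).flatMap
      (fun k => ((a.drop (l * k)).take l) ++ ((b.drop (l * k)).take l))
  | 0, _, _ => rfl
  | n + 1, a, b => by
    rw [wreathAux, wreathAux_eq l n, List.range_succ_eq_map, List.flatMap_cons,
      List.flatMap_map]
    simp only [Nat.mul_zero, List.drop_zero, List.append_assoc]
    congr 1
    congr 1
    apply List.flatMap_congr
    intro k _
    rw [List.drop_drop, List.drop_drop, show l + l * k = l * Nat.succ k by rw [Nat.mul_succ, Nat.add_comm]]

lemma flatMap_block (f : Fin 6 → List (Fin 6)) (hf : ∀ x, (f x).length = 3) :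
    ∀ (l : List (Fin 6)) (k : ℕ), k < l.length →
      ((l.flatMap f).drop (3 * k)).take 3 = f (l.getD k 0)
  | x :: l, 0, _ => by
    rw [List.flatMap_cons]
    simp only [Nat.mul_zero, List.drop_zero, List.getD_cons_zero]
    exact List.take_left' (hf x)
  | x :: l, k + 1, h => by
    rw [List.flatMap_cons, show 3 * (k + 1) = 3 + 3 * k by ring, ← List.drop_drop,
      List.drop_left' (hf x), List.getD_cons_succ]
    exact flatMap_block f hf l k (by simpa using Nat.lt_of_succ_lt_succ h)

/-- The basic pattern of `Z(3,·)` over `456`. -/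
def pat : List ℕ := [4, 5, 6, 5, 6, 4, 6, 4, 5]

lemma circ_eq (n : ℕ) : circSeq [4, 5, 6] n = (List.range n).flatMap fun _ => pat := rfl

lemma z_block : ∀ (n k : ℕ), k < 3 * n →
    ((((List.range n).flatMap fun _ => pat).drop (3 * k)).take 3)
      = [4 + k % 3, 4 + (k + 1) % 3, 4 + (k + 2) % 3]
  | n + 1, k, hk => by
    have hsplit : ((List.range (n+1)).flatMap fun _ => pat)
        = pat ++ ((List.range n).flatMap fun _ => pat) := by
      rw [List.range_succ_eq_map, List.flatMap_cons, List.flatMap_map]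
    rw [hsplit]
    rcases Nat.lt_or_ge k 3 with h3 | h3
    · obtain rfl | rfl | rfl : k = 0 ∨ k = 1 ∨ k = 2 := by omega
      · rfl
      · rfl
      · rfl
    · obtain ⟨k', rfl⟩ : ∃ k', k = k' + 3 := ⟨k - 3, by omega⟩
      rw [show 3 * (k' + 3) = 9 + 3 * k' by ring, ← List.drop_drop,
        List.drop_left' (by rfl : pat.length = 9)]
      rw [z_block n k' (by omega)]
      have e1 : (k' + 3) % 3 = k' % 3 := by omega
      have e2 : (k' + 3 + 1) % 3 = (k' + 1) % 3 := by omega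
      have e3 : (k' + 3 + 2) % 3 = (k' + 2) % 3 := by omega
      rw [e1, e2, e3]

/-! ### The chunks of `φ₄ᵗ` -/

/-- The projected, shifted `κ`-image letters. -/
def kA : Fin 6 → ℕ := ![1, 3, 2, 1, 3, 2]
def kB : Fin 6 → ℕ := ![2, 2, 3, 3, 1, 1]
def kC : Fin 6 → ℕ := ![3, 1, 1, 2, 2, 3]

lemma gl_spec : ∀ x : Fin 6,
    (hexKappa x).map (fun v => ((hexPi v : Fin 3) : ℕ) + 1) = [kA x, kB x, kC x] := by decide

/-- The `k`-th 6-letter chunk of `φ₄ᵗ`, given the `k`-th letter `x` of `hexIter (t-1)`. -/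
def chunkT (x : Fin 6) (k : ℕ) : Chunk :=
  (kA x, kB x, kC x, 4 + k % 3, 4 + (k + 1) % 3, 4 + (k + 2) % 3)

lemma cOK_chunkT (x : Fin 6) (k : ℕ) : cOK (chunkT x k) := by
  have hK : 1 ≤ kA x ∧ kA x ≤ 3 ∧ 1 ≤ kB x ∧ kB x ≤ 3 ∧ 1 ≤ kC x ∧ kC x ≤ 3 ∧
      kA x ≠ kB x ∧ kA x ≠ kC x ∧ kB x ≠ kC x := by revert x; decide
  obtain ⟨h1, h2, h3, h4, h5, h6, h7, h8, h9⟩ := hK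
  have m0 : k % 3 < 3 := Nat.mod_lt _ (by omega)
  have m1 : (k + 1) % 3 < 3 := Nat.mod_lt _ (by omega)
  have m2 : (k + 2) % 3 < 3 := Nat.mod_lt _ (by omega)
  exact ⟨h1, h2, h3, h4, h5, h6, h7, h8, h9, by omega, by omega, by omega, by omega,
    by omega, by omega, by omega, by omega, by omega⟩

lemma adjI_ne : ∀ x y : Fin 6, adjI x y → kC x ≠ kA y := by decide

lemma phi4_succ (s : ℕ) : phi4 (s + 1) = wreathAux 3 (3 ^ s)
    ((hexIter (s + 1)).map fun v => ((hexPi v : Fin 3) : ℕ) + 1)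
    (circSeq [4, 5, 6] (3 ^ s)) := by
  have h : ((hexK (s + 1)).map fun x => (x : ℕ) + 1)
      = (hexIter (s + 1)).map (fun v => ((hexPi v : Fin 3) : ℕ) + 1) := by
    simp [hexK, ← List.map_eq_flatMap, List.map_map, Function.comp_def]
  rw [phi4, h, Nat.add_sub_cancel]

/-- `φ₄^(s+1)` as a concatenation of chunks. -/
lemma phi4_eq (s : ℕ) : phi4 (s + 1) =
    ((List.range (3 ^ s)).map fun k => chunkT ((hexIter s).getD k 0) k).flatMap cToList := by
  rw [phi4_succ, List.flatMap_map, wreathAux_eq]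
  apply List.flatMap_congr
  intro k hk
  have hk' : k < 3 ^ s := List.mem_range.mp hk
  have hK : (((hexIter (s + 1)).map fun v => ((hexPi v : Fin 3) : ℕ) + 1).drop (3 * k)).take 3
      = [kA ((hexIter s).getD k 0), kB ((hexIter s).getD k 0), kC ((hexIter s).getD k 0)] := by
    rw [← List.map_drop, ← List.map_take]
    rw [show hexIter (s + 1) = (hexIter s).flatMap hexKappa from rfl]
    rw [flatMap_block hexKappa hexKappa_length (hexIter s) k (by rw [hexIter_length]; exact hk')]
    exact gl_spec _
  have hZ : ((circSeq [4, 5, 6] (3 ^ s)).drop (3 * k)).take 3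
      = [4 + k % 3, 4 + (k + 1) % 3, 4 + (k + 2) % 3] := by
    rw [circ_eq]
    exact z_block _ k (by omega)
  rw [hK, hZ]
  rfl

end Phi4Aux

theorem phi4_five_distinct (t : ℕ) (j : ℕ) :
    (((phi4 t).drop j).take 5).Nodup := by
  cases t with
  | zero =>
    have h0 : phi4 0 = [1, 4, 5, 6] := rfl
    rw [h0]
    rcases Nat.lt_or_ge j 4 with hj | hj
    · obtain rfl | rfl | rfl | rfl : j = 0 ∨ j = 1 ∨ j = 2 ∨ j = 3 := by omega
      · decide
      · decide
      · decide
      · decide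
    · rw [List.drop_eq_nil_of_le (by simpa using hj)]
      simp
  | succ s =>
    rw [Phi4Aux.phi4_eq s]
    apply Phi4Aux.good5
    · intro c hc
      obtain ⟨k, -, rfl⟩ := List.mem_map.mp hc
      exact Phi4Aux.cOK_chunkT _ _
    · unfold List.Chain'
      rw [List.isChain_map, List.isChain_iff_getElem]
      intro i hi
      simp only [List.getElem_range]
      have hlen : (hexIter s).length = 3 ^ s := Phi4Aux.hexIter_length s
      have hi' : i < 3 ^ s - 1 := by simp at hi; omega
      have hpos : 1 ≤ 3 ^ s := Nat.one_le_pow _ _ (by omega)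
      have hadj := List.isChain_iff_getElem.mp (Phi4Aux.chain'_hexIter s) i (by omega)
      refine ⟨?_, by omega⟩
      rw [List.getD_eq_getElem _ _ (by omega), List.getD_eq_getElem _ _ (by omega)]
      have := Phi4Aux.adjI_ne _ _ hadj
      simpa using this
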